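/- Let M_• be a simplicial topological space and A^• an abelian sheaf on M_•. Then for any open cover U_• of M_• and all n ≥ 1, H^n(U_•; I(A)^•) = 0; indeed the complex C^*(U_•;I(A)^•) is homotopically trivial. -/

import Mathlib

open TopologicalSpace

universe u

namespace GroupoidCohomology

/-- Morphisms `[k] → [n]` of the simplicial category `Δ`: nondecreasing maps. -/
abbrev DeltaHom (k n : ℕ) : Type := Fin (k + 1) →o Fin (n + 1)

/-- Morphisms of the semi-simplicial category `Δ'`: strictly increasing maps. -/
def StrictHom (k n : ℕ) : Type := {f : DeltaHom k n // StrictMono f}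

instance (k n : ℕ) : Finite (DeltaHom k n) :=
  Finite.of_injective (fun f => (f : Fin (k + 1) → Fin (n + 1))) DFunLike.coe_injective

instance (k n : ℕ) : Finite (StrictHom k n) := by
  unfold StrictHom; infer_instance

lemma StrictHom.le_target {k n : ℕ} (f : StrictHom k n) : k ≤ n := by
  have : Fintype.card (Fin (k + 1)) ≤ Fintype.card (Fin (n + 1)) :=
    Fintype.card_le_of_injective _ f.2.injective
  simpa using this

/-- The `i`-th coface map `ε_i : [n] → [n+1]`, the increasing injection omitting `i`. -/
def deltaEps (n : ℕ) (i : Fin (n + 2)) : DeltaHom n (n + 1) :=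
  (Fin.succAboveOrderEmb i).toOrderHom

lemma deltaEps_strictMono (n : ℕ) (i : Fin (n + 2)) : StrictMono (deltaEps n i) :=
  (Fin.succAboveOrderEmb i).strictMono

/-- A simplicial topological space: a contravariant functor from `Δ` to spaces. -/
structure SimplicialSpace : Type (u + 1) where
  X : ℕ → Type u
  topX : ∀ n, TopologicalSpace (X n)
  map : ∀ {k n : ℕ}, DeltaHom k n → X n → X k
  map_continuous : ∀ {k n : ℕ} (f : DeltaHom k n), Continuous (map f)
  map_id : ∀ {n : ℕ} (x : X n), map (OrderHom.id) x = x
  map_comp : ∀ {l k n : ℕ} (g : DeltaHom l k) (f : DeltaHom k n) (x : X n),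
      map g (map f x) = map (f.comp g) x

attribute [instance] SimplicialSpace.topX

variable {M : SimplicialSpace.{u}}

/-- An abelian presheaf on a topological space, given by its groups of sections
and restriction maps. -/
structure AbPresheaf (X : Type u) [TopologicalSpace X] : Type (u + 1) where
  sec : Opens X → Type u
  grp : ∀ U, AddCommGroup (sec U)
  res : ∀ {U V : Opens X}, U ≤ V → sec V →+ sec U
  res_rfl : ∀ {U : Opens X} (s : sec U), res le_rfl s = s
  res_res : ∀ {U V W : Opens X} (h₁ : U ≤ V) (h₂ : V ≤ W) (s : sec W),
      res h₁ (res h₂ s) = res (h₁.trans h₂) s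

attribute [instance] AbPresheaf.grp

/-- The sheaf condition for an abelian presheaf. -/
def AbPresheaf.IsSheaf {X : Type u} [TopologicalSpace X] (F : AbPresheaf X) : Prop :=
  ∀ {ι : Type u} (U : ι → Opens X) (s : ∀ i, F.sec (U i)),
    (∀ i j, F.res (inf_le_left : U i ⊓ U j ≤ U i) (s i)
        = F.res (inf_le_right : U i ⊓ U j ≤ U j) (s j)) →
    ∃! t : F.sec (iSup U), ∀ i, F.res (le_iSup U i) t = s i

lemma SimplicialSpace.idLe (M : SimplicialSpace.{u}) {n : ℕ} {U V : Opens (M.X n)}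
    (h : ∀ x ∈ U, M.map OrderHom.id x ∈ V) : U ≤ V :=
  fun x hx => by have := h x hx; rwa [M.map_id] at this

/-- An abelian sheaf (presheaf) on a simplicial space: a family of abelian presheaves
`Sh n` on `M.X n` together with compatible restriction maps
`f̃* : A^k(V) → A^n(U)` whenever `f̃(U) ⊆ V`, functorial in `f`. -/
structure SimpAbPresheaf (M : SimplicialSpace.{u}) : Type (u + 1) where
  Sh : ∀ n : ℕ, AbPresheaf (M.X n)
  cmap : ∀ {k n : ℕ} (f : DeltaHom k n) {U : Opens (M.X n)} {V : Opens (M.X k)},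
      (∀ x ∈ U, M.map f x ∈ V) → ((Sh k).sec V →+ (Sh n).sec U)
  cmap_res : ∀ {k n : ℕ} (f : DeltaHom k n) {U U' : Opens (M.X n)} {V V' : Opens (M.X k)}
      (hU : U' ≤ U) (hV : V' ≤ V)
      (h : ∀ x ∈ U, M.map f x ∈ V) (h' : ∀ x ∈ U', M.map f x ∈ V')
      (sv : (Sh k).sec V),
      (Sh n).res hU (cmap f h sv) = cmap f h' ((Sh k).res hV sv)
  cmap_id : ∀ {n : ℕ} {U V : Opens (M.X n)}
      (h : ∀ x ∈ U, M.map OrderHom.id x ∈ V) (sv : (Sh n).sec V),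
      cmap OrderHom.id h sv = (Sh n).res (M.idLe h) sv
  cmap_comp : ∀ {l k n : ℕ} (g : DeltaHom l k) (f : DeltaHom k n)
      {U : Opens (M.X n)} {V : Opens (M.X k)} {W : Opens (M.X l)}
      (hf : ∀ x ∈ U, M.map f x ∈ V) (hg : ∀ x ∈ V, M.map g x ∈ W)
      (sw : (Sh l).sec W),
      cmap f hf (cmap g hg sw)
        = cmap (f.comp g)
            (fun x hx => by rw [← M.map_comp g f x]; exact hg _ (hf x hx)) sw

/-- `𝒜` is a sheaf if each of its levels satisfies the sheaf condition. -/
def SimpAbPresheaf.IsSheaf (𝒜 : SimpAbPresheaf M) : Prop := ∀ n, (𝒜.Sh n).IsSheaf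

/-- An open cover of a simplicial space. -/
structure Cover (M : SimplicialSpace.{u}) : Type (u + 1) where
  idx : ℕ → Type u
  U : ∀ n, idx n → Opens (M.X n)
  covers : ∀ (n : ℕ) (x : M.X n), ∃ i, x ∈ U n i

/-- The index set `Λ_n` of the semi-simplicial cover `σ𝒰` associated to a cover `𝒰`:
maps assigning to each morphism of `Δ'` with target `[n]` an index. -/
def Cover.Lambda (𝒰 : Cover M) (n : ℕ) : Type u :=
  ∀ (k : ℕ), StrictHom k n → 𝒰.idx k

def Cover.lambdaSet (𝒰 : Cover M) {n : ℕ} (l : 𝒰.Lambda n) : Set (M.X n) :=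
  {x | ∀ (k : ℕ) (f : StrictHom k n), M.map f.1 x ∈ 𝒰.U k (l k f)}

lemma Cover.isOpen_lambdaSet (𝒰 : Cover M) {n : ℕ} (l : 𝒰.Lambda n) :
    IsOpen (𝒰.lambdaSet l) := by
  have : 𝒰.lambdaSet l
      = ⋂ (k : Fin (n + 1)), ⋂ (f : StrictHom k n), (M.map f.1) ⁻¹' (𝒰.U k (l k f)) := by
    ext x
    simp only [Cover.lambdaSet, Set.mem_setOf_eq, Set.mem_iInter, Set.mem_preimage]
    constructor
    · intro h k f; exact h k f
    · intro h k f
      exact h ⟨k, Nat.lt_succ_of_le f.le_target⟩ f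
  rw [this]
  exact isOpen_iInter_of_finite fun k =>
    isOpen_iInter_of_finite fun f =>
      (𝒰.U _ _).isOpen.preimage (M.map_continuous f.1)

/-- The open set `U^n_λ = ⋂_{f} f̃⁻¹(U^k_{λ(f)})`. -/
def Cover.lambdaOpen (𝒰 : Cover M) {n : ℕ} (l : 𝒰.Lambda n) : Opens (M.X n) :=
  ⟨𝒰.lambdaSet l, 𝒰.isOpen_lambdaSet l⟩

lemma Cover.mem_lambdaOpen (𝒰 : Cover M) {n : ℕ} {l : 𝒰.Lambda n} {x : M.X n} :
    x ∈ 𝒰.lambdaOpen l ↔ ∀ (k : ℕ) (f : StrictHom k n), M.map f.1 x ∈ 𝒰.U k (l k f) :=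
  Iff.rfl

/-- The space of Čech `n`-cochains `C^n(𝒰;𝒜) = C^n_{ss}(σ𝒰;𝒜) = ∏_{λ∈Λ_n} 𝒜^n(U^n_λ)`. -/
abbrev Cochain (𝒜 : SimpAbPresheaf M) (𝒰 : Cover M) (n : ℕ) : Type u :=
  ∀ l : 𝒰.Lambda n, (𝒜.Sh n).sec (𝒰.lambdaOpen l)

/-- `ε̃ₖ(λ)`: pull back an index `λ ∈ Λ_{n+1}` along the coface `ε_k`. -/
def Cover.epsPull (𝒰 : Cover M) {n : ℕ} (k : Fin (n + 2)) (l : 𝒰.Lambda (n + 1)) :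
    𝒰.Lambda n :=
  fun r f => l r ⟨(deltaEps n k).comp f.1, (deltaEps_strictMono n k).comp f.2⟩

lemma Cover.mem_epsPull (𝒰 : Cover M) {n : ℕ} (k : Fin (n + 2)) (l : 𝒰.Lambda (n + 1))
    {x : M.X (n + 1)} (hx : x ∈ 𝒰.lambdaOpen l) :
    M.map (deltaEps n k) x ∈ 𝒰.lambdaOpen (𝒰.epsPull k l) := by
  intro r f
  rw [M.map_comp f.1 (deltaEps n k) x]
  exact hx r _

/-- The Čech differential `(dc)_λ = Σ_k (−1)^k ε̃ₖ^* c_{ε̃ₖ(λ)}`. -/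
def coboundary (𝒜 : SimpAbPresheaf M) (𝒰 : Cover M) (n : ℕ) :
    Cochain 𝒜 𝒰 n →+ Cochain 𝒜 𝒰 (n + 1) where
  toFun c := fun l => ∑ k : Fin (n + 2),
    ((-1 : ℤ) ^ (k : ℕ)) •
      𝒜.cmap (deltaEps n k) (fun x hx => 𝒰.mem_epsPull k l hx) (c (𝒰.epsPull k l))
  map_zero' := by
    funext l
    simp
  map_add' c₁ c₂ := by
    funext l
    simp [smul_add, Finset.sum_add_distrib]

/-- Čech cocycles. -/
def cocycles (𝒜 : SimpAbPresheaf M) (𝒰 : Cover M) (n : ℕ) : AddSubgroup (Cochain 𝒜 𝒰 n) :=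
  (coboundary 𝒜 𝒰 n).ker

/-- Čech coboundaries (with the convention `C^{-1} = 0`). -/
def boundaries (𝒜 : SimpAbPresheaf M) (𝒰 : Cover M) : (n : ℕ) → AddSubgroup (Cochain 𝒜 𝒰 n)
  | 0 => ⊥
  | (n + 1) => (coboundary 𝒜 𝒰 n).range

/-- The Čech cohomology `H^n(𝒰;𝒜) = H^n_{ss}(σ𝒰;𝒜)` of a cover. -/
def coverH (𝒜 : SimpAbPresheaf M) (𝒰 : Cover M) (n : ℕ) : Type u :=
  cocycles 𝒜 𝒰 n ⧸ (boundaries 𝒜 𝒰 n).addSubgroupOf (cocycles 𝒜 𝒰 n)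

noncomputable instance (𝒜 : SimpAbPresheaf M) (𝒰 : Cover M) (n : ℕ) :
    AddCommGroup (coverH 𝒜 𝒰 n) := by
  unfold coverH; infer_instance

/-- A refinement `θ : 𝒱 → 𝒰` between covers. -/
structure Refines (𝒱 𝒰 : Cover M) : Type u where
  θ : ∀ n, 𝒱.idx n → 𝒰.idx n
  sub : ∀ (n : ℕ) (j : 𝒱.idx n), 𝒱.U n j ≤ 𝒰.U n (θ n j)

def Refines.lambdaMap {𝒱 𝒰 : Cover M} (ρ : Refines 𝒱 𝒰) {n : ℕ} (l : 𝒱.Lambda n) :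
    𝒰.Lambda n :=
  fun k f => ρ.θ k (l k f)

lemma Refines.lambdaOpen_le {𝒱 𝒰 : Cover M} (ρ : Refines 𝒱 𝒰) {n : ℕ} (l : 𝒱.Lambda n) :
    𝒱.lambdaOpen l ≤ 𝒰.lambdaOpen (ρ.lambdaMap l) :=
  fun x hx k f => ρ.sub k (l k f) (hx k f)

/-- The restriction map `θ^* : C^n(𝒰;𝒜) → C^n(𝒱;𝒜)` induced by a refinement. -/
def Refines.cochainMap {𝒱 𝒰 : Cover M} (ρ : Refines 𝒱 𝒰) (𝒜 : SimpAbPresheaf M) (n : ℕ) :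
    Cochain 𝒜 𝒰 n →+ Cochain 𝒜 𝒱 n where
  toFun c := fun l => (𝒜.Sh n).res (ρ.lambdaOpen_le l) (c (ρ.lambdaMap l))
  map_zero' := by funext l; simp
  map_add' c₁ c₂ := by funext l; simp

lemma Refines.cochainMap_coboundary {𝒱 𝒰 : Cover M} (ρ : Refines 𝒱 𝒰)
    (𝒜 : SimpAbPresheaf M) (n : ℕ) (c : Cochain 𝒜 𝒰 n) :
    ρ.cochainMap 𝒜 (n + 1) (coboundary 𝒜 𝒰 n c)
      = coboundary 𝒜 𝒱 n (ρ.cochainMap 𝒜 n c) := by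
  funext l
  show (𝒜.Sh (n + 1)).res _ (∑ k : Fin (n + 2), _) = ∑ k : Fin (n + 2), _
  rw [map_sum]
  refine Finset.sum_congr rfl fun k _ => ?_
  rw [map_zsmul]
  congr 1
  exact 𝒜.cmap_res (deltaEps n k) (ρ.lambdaOpen_le l)
    (ρ.lambdaOpen_le (𝒱.epsPull k l)) _ _ _

lemma Refines.cochainMap_mem_cocycles {𝒱 𝒰 : Cover M} (ρ : Refines 𝒱 𝒰)
    (𝒜 : SimpAbPresheaf M) (n : ℕ) {c : Cochain 𝒜 𝒰 n} (hc : c ∈ cocycles 𝒜 𝒰 n) :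
    ρ.cochainMap 𝒜 n c ∈ cocycles 𝒜 𝒱 n := by
  have h := ρ.cochainMap_coboundary 𝒜 n c
  simp only [cocycles, AddMonoidHom.mem_ker] at hc ⊢
  rw [← h, hc, map_zero]

lemma Refines.cochainMap_mem_boundaries {𝒱 𝒰 : Cover M} (ρ : Refines 𝒱 𝒰)
    (𝒜 : SimpAbPresheaf M) (n : ℕ) {c : Cochain 𝒜 𝒰 n} (hc : c ∈ boundaries 𝒜 𝒰 n) :
    ρ.cochainMap 𝒜 n c ∈ boundaries 𝒜 𝒱 n := by
  cases n with
  | zero =>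
      simp only [boundaries, AddSubgroup.mem_bot] at hc ⊢
      rw [hc, map_zero]
  | succ n =>
      simp only [boundaries, AddMonoidHom.mem_range] at hc ⊢
      obtain ⟨b, rfl⟩ := hc
      exact ⟨ρ.cochainMap 𝒜 n b, (ρ.cochainMap_coboundary 𝒜 n b).symm⟩

/-- The map induced by a refinement on cocycles. -/
def Refines.cocycleMap {𝒱 𝒰 : Cover M} (ρ : Refines 𝒱 𝒰) (𝒜 : SimpAbPresheaf M) (n : ℕ) :
    cocycles 𝒜 𝒰 n →+ cocycles 𝒜 𝒱 n :=
  ((ρ.cochainMap 𝒜 n).comp (cocycles 𝒜 𝒰 n).subtype).codRestrict _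
    (fun c => ρ.cochainMap_mem_cocycles 𝒜 n c.2)

/-- The map `H^n(𝒰;𝒜) → H^n(𝒱;𝒜)` induced by a refinement. -/
noncomputable def Refines.Hmap {𝒱 𝒰 : Cover M} (ρ : Refines 𝒱 𝒰) (𝒜 : SimpAbPresheaf M)
    (n : ℕ) : coverH 𝒜 𝒰 n →+ coverH 𝒜 𝒱 n :=
  QuotientAddGroup.map _ _ (ρ.cocycleMap 𝒜 n) (by
    intro z hz
    simp only [AddSubgroup.mem_addSubgroupOf, AddSubgroup.mem_comap] at hz ⊢
    exact ρ.cochainMap_mem_boundaries 𝒜 n hz)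

lemma Refines.Hmap_mk {𝒱 𝒰 : Cover M} (ρ : Refines 𝒱 𝒰) (𝒜 : SimpAbPresheaf M)
    (n : ℕ) (z : cocycles 𝒜 𝒰 n) :
    ρ.Hmap 𝒜 n (QuotientAddGroup.mk' _ z)
      = QuotientAddGroup.mk' _ (ρ.cocycleMap 𝒜 n z) :=
  QuotientAddGroup.map_mk' _ _ _ _ _

end GroupoidCohomology

namespace GroupoidCohomology

open TopologicalSpace

variable {M : SimplicialSpace.{u}}

section Stalks

variable {X : Type u} [TopologicalSpace X]

/-- The directed set of open neighbourhoods of a point. -/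
def Nbhds (X : Type u) [TopologicalSpace X] (x : X) : Type u := {U : Opens X // x ∈ U}

instance (x : X) : Preorder (Nbhds X x) where
  le U V := V.1 ≤ U.1
  le_refl U := fun z hz => hz
  le_trans U V W h₁ h₂ := fun z hz => h₁ (h₂ hz)

lemma Nbhds.le_opens {x : X} {U V : Nbhds X x} (h : U ≤ V) : V.1 ≤ U.1 :=
  fun z hz => h hz

lemma Nbhds.opens_le {x : X} {U V : Nbhds X x} (h : V.1 ≤ U.1) : U ≤ V :=
  fun z hz => h hz

instance (x : X) : Nonempty (Nbhds X x) := ⟨⟨⊤, trivial⟩⟩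

instance (x : X) : IsDirected (Nbhds X x) (· ≤ ·) where
  directed U V :=
    ⟨⟨U.1 ⊓ V.1, ⟨U.2, V.2⟩⟩,
      Nbhds.opens_le inf_le_left, Nbhds.opens_le inf_le_right⟩

/-- The stalk of an abelian presheaf at a point: the direct limit of the sections over
the open neighbourhoods of the point. -/
noncomputable def Stalk (F : AbPresheaf X) (x : X) : Type u :=
  @AddCommGroup.DirectLimit (Nbhds X x) _ (fun U => F.sec U.1) _ (Classical.decEq _)
    (fun _ _ h => F.res (Nbhds.le_opens h))

noncomputable instance (F : AbPresheaf X) (x : X) : AddCommGroup (Stalk F x) := by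
  unfold Stalk; infer_instance

instance stalkDirSys (F : AbPresheaf X) (x : X) :
    DirectedSystem (fun U : Nbhds X x => F.sec U.1)
      (fun _ _ h => (F.res (Nbhds.le_opens h) : F.sec _ →+ F.sec _)) where
  map_self := by intro U s; exact F.res_rfl s
  map_map := by intro U V W h₁ h₂ s; exact F.res_res _ _ s

/-- The germ of a section at a point. -/
noncomputable def germ (F : AbPresheaf X) {x : X} (U : Opens X) (hx : x ∈ U) :
    F.sec U →+ Stalk F x :=
  @AddCommGroup.DirectLimit.of (Nbhds X x) _ (fun U => F.sec U.1) _
    (fun _ _ h => F.res (Nbhds.le_opens h)) (Classical.decEq _) ⟨U, hx⟩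

lemma germ_res (F : AbPresheaf X) {x : X} {U V : Opens X} (h : V ≤ U) (hx : x ∈ V)
    (hx' : x ∈ U) (s : F.sec U) :
    germ F V hx (F.res h s) = germ F U hx' s :=
  @AddCommGroup.DirectLimit.of_f (Nbhds X x) _ (fun U => F.sec U.1) _
    (fun _ _ h => F.res (Nbhds.le_opens h)) (Classical.decEq _) ⟨U, hx'⟩ ⟨V, hx⟩
    (Nbhds.opens_le h) s

/-- Transport of stalks along an equality of points. -/
noncomputable def stalkCast (F : AbPresheaf X) {x y : X} (e : x = y) :
    Stalk F x →+ Stalk F y := by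
  subst e; exact AddMonoidHom.id _

lemma stalkCast_germ (F : AbPresheaf X) {x y : X} (e : x = y) (U : Opens X)
    (hx : x ∈ U) (s : F.sec U) :
    stalkCast F e (germ F U hx s) = germ F U (e ▸ hx) s := by
  subst e; rfl

lemma stalkCast_eval {W : Set X} {T : AbPresheaf X}
    (φ : ∀ z : W, Stalk T z.1) {y x : X} (e : y = x) (hy : y ∈ W) :
    stalkCast T e (φ ⟨y, hy⟩) = φ ⟨x, e ▸ hy⟩ := by
  subst e; rfl

end Stalks

/-- The preimage of an open set along a structure map of a simplicial space. -/
def preOpen (M : SimplicialSpace.{u}) {k n : ℕ} (f : DeltaHom k n) (U : Opens (M.X k)) :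
    Opens (M.X n) :=
  ⟨M.map f ⁻¹' U, U.isOpen.preimage (M.map_continuous f)⟩

lemma mem_preOpen {k n : ℕ} {f : DeltaHom k n} {U : Opens (M.X k)} {x : M.X n} :
    x ∈ preOpen M f U ↔ M.map f x ∈ U := Iff.rfl

/-- The map induced on stalks by the structure maps of a simplicial sheaf:
`Stalk 𝒜^k (f̃ x) →+ Stalk 𝒜^n x`. -/
noncomputable def stalkMap (𝒜 : SimpAbPresheaf M) {k n : ℕ} (f : DeltaHom k n)
    (x : M.X n) : Stalk (𝒜.Sh k) (M.map f x) →+ Stalk (𝒜.Sh n) x :=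
  @AddCommGroup.DirectLimit.lift (Nbhds (M.X k) (M.map f x)) _
    (fun U => (𝒜.Sh k).sec U.1) _ (fun _ _ h => (𝒜.Sh k).res (Nbhds.le_opens h))
    (Classical.decEq _) _ _
    (fun W => (germ (𝒜.Sh n) (preOpen M f W.1) (W.2 : M.map f x ∈ W.1)).comp
      (𝒜.cmap f (fun _ hz => hz)))
    (by
      intro W W' hW s
      have hW' : W'.1 ≤ W.1 := Nbhds.le_opens hW
      have hpre : preOpen M f W'.1 ≤ preOpen M f W.1 := fun z hz => hW' hz
      show germ (𝒜.Sh n) (preOpen M f W'.1) _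
          (𝒜.cmap f (fun _ hz => hz) ((𝒜.Sh k).res hW' s)) = _
      rw [← 𝒜.cmap_res f hpre hW' (fun _ hz => hz) (fun _ hz => hz) s]
      exact germ_res (𝒜.Sh n) hpre _ _ _)

lemma stalkMap_germ (𝒜 : SimpAbPresheaf M) {k n : ℕ} (f : DeltaHom k n) (x : M.X n)
    (W : Opens (M.X k)) (hW : M.map f x ∈ W) (s : (𝒜.Sh k).sec W) :
    stalkMap 𝒜 f x (germ (𝒜.Sh k) W hW s)
      = germ (𝒜.Sh n) (preOpen M f W) hW (𝒜.cmap f (fun _ hz => hz) s) := by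
  letI := Classical.decEq (Nbhds (M.X k) (M.map f x))
  exact AddCommGroup.DirectLimit.lift_of _ _ _ _ _

lemma stalkMap_id (𝒜 : SimpAbPresheaf M) {n : ℕ} (x : M.X n)
    (ξ : Stalk (𝒜.Sh n) (M.map OrderHom.id x)) :
    stalkMap 𝒜 OrderHom.id x ξ = stalkCast (𝒜.Sh n) (M.map_id x) ξ := by
  induction ξ using AddCommGroup.DirectLimit.induction_on with
  | ih W s =>
    obtain ⟨W, hW⟩ := W
    show stalkMap 𝒜 OrderHom.id x (germ (𝒜.Sh n) W hW s)
        = stalkCast (𝒜.Sh n) (M.map_id x) (germ (𝒜.Sh n) W hW s)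
    rw [stalkMap_germ, stalkCast_germ]
    exact (congrArg (germ (𝒜.Sh n) (preOpen M OrderHom.id W) hW) (𝒜.cmap_id _ s)).trans
      (germ_res (𝒜.Sh n) _ _ _ s)

lemma stalkMap_comp (𝒜 : SimpAbPresheaf M) {l k n : ℕ} (g : DeltaHom l k)
    (f : DeltaHom k n) (x : M.X n)
    (ξ : Stalk (𝒜.Sh l) (M.map g (M.map f x))) :
    stalkMap 𝒜 f x (stalkMap 𝒜 g (M.map f x) ξ)
      = stalkMap 𝒜 (f.comp g) x (stalkCast (𝒜.Sh l) (M.map_comp g f x) ξ) := by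
  induction ξ using AddCommGroup.DirectLimit.induction_on with
  | ih W s =>
    obtain ⟨W, hW⟩ := W
    show stalkMap 𝒜 f x (stalkMap 𝒜 g (M.map f x) (germ (𝒜.Sh l) W hW s))
        = stalkMap 𝒜 (f.comp g) x (stalkCast (𝒜.Sh l) (M.map_comp g f x)
            (germ (𝒜.Sh l) W hW s))
    refine (congrArg (stalkMap 𝒜 f x) (stalkMap_germ 𝒜 g (M.map f x) W hW s)).trans ?_
    refine (stalkMap_germ 𝒜 f x (preOpen M g W) hW _).trans ?_
    refine Eq.trans ?_ (congrArg (stalkMap 𝒜 (f.comp g) x)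
      (stalkCast_germ (𝒜.Sh l) (M.map_comp g f x) W hW s)).symm
    refine Eq.trans ?_ (stalkMap_germ 𝒜 (f.comp g) x W
      (by rw [← M.map_comp g f x]; exact hW) s).symm
    -- the two germs live over the (equal) opens `preOpen f (preOpen g W)` and
    -- `preOpen (f.comp g) W`; compare them after restricting.
    have hle : preOpen M f (preOpen M g W) ≤ preOpen M (f.comp g) W := by
      intro z hz
      show M.map (f.comp g) z ∈ W
      rw [← M.map_comp g f z]
      exact hz
    have key : 𝒜.cmap f (U := preOpen M f (preOpen M g W)) (V := preOpen M g W)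
        (fun _ hz => hz) (𝒜.cmap g (V := W) (fun _ hz => hz) s)
        = (𝒜.Sh n).res hle
            (𝒜.cmap (f.comp g) (U := preOpen M (f.comp g) W) (fun _ hz => hz) s) := by
      exact (𝒜.cmap_comp g f (U := preOpen M f (preOpen M g W)) (V := preOpen M g W) (W := W)
        (fun _ hz => hz) (fun _ hz => hz) s).trans
        ((congrArg (𝒜.cmap (f.comp g) (U := preOpen M f (preOpen M g W)) (V := W)
          (fun z hz => by rw [← M.map_comp g f z]; exact hz)) ((𝒜.Sh l).res_rfl s).symm).trans
          (𝒜.cmap_res (f.comp g) hle le_rfl (fun _ hz => hz)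
            (fun z hz => by rw [← M.map_comp g f z]; exact hz) s).symm)
    exact (congrArg (germ (𝒜.Sh n) (preOpen M f (preOpen M g W)) hW) key).trans
      (germ_res (𝒜.Sh n) hle hW _ _)

lemma stalkMap_congr_hom (𝒜 : SimpAbPresheaf M) {k n : ℕ} {g₁ g₂ : DeltaHom k n}
    (e : g₁ = g₂) (x : M.X n) (ep : M.map g₁ x = M.map g₂ x)
    (ξ : Stalk (𝒜.Sh k) (M.map g₁ x)) :
    stalkMap 𝒜 g₁ x ξ = stalkMap 𝒜 g₂ x (stalkCast (𝒜.Sh k) ep ξ) := by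
  subst e; rfl

end GroupoidCohomology

namespace GroupoidCohomology

open TopologicalSpace

variable {M : SimplicialSpace.{u}}

/-- `f' : [k+1] → [n+1]`, the morphism with `f'(0) = 0` and `ε₀ ∘ f = f' ∘ ε₀`. -/
def primeHom {k n : ℕ} (f : DeltaHom k n) : DeltaHom (k + 1) (n + 1) where
  toFun := Fin.cases 0 (fun i => (f i).succ)
  monotone' := by
    refine Fin.cases ?_ ?_
    · intro b _
      simp only [Fin.cases_zero]
      exact Fin.zero_le _
    · intro i
      refine Fin.cases ?_ ?_
      · intro h
        exact absurd (Fin.le_zero_iff.mp h) (Fin.succ_ne_zero i)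
      · intro j h
        simp only [Fin.cases_succ]
        have hij : i ≤ j := by
          rw [Fin.le_def] at h ⊢
          simpa using h
        exact Fin.succ_le_succ_iff.mpr (f.monotone hij)

lemma primeHom_id (n : ℕ) : primeHom (OrderHom.id : DeltaHom n n) = OrderHom.id := by
  ext j
  induction j using Fin.cases with
  | zero => simp [primeHom]
  | succ i => simp [primeHom]

lemma primeHom_comp {l k n : ℕ} (g : DeltaHom l k) (f : DeltaHom k n) :
    primeHom (f.comp g) = (primeHom f).comp (primeHom g) := by
  ext j
  induction j using Fin.cases with
  | zero => simp [primeHom] <;> rfl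
  | succ i => simp [primeHom] <;> rfl

lemma primeHom_eps {k n : ℕ} (f : DeltaHom k n) :
    (deltaEps n 0).comp f = (primeHom f).comp (deltaEps k 0) := by
  ext i
  simp [primeHom, deltaEps, Fin.zero_succAbove] <;> rfl

/-- `ε̃₀⁻¹(U)`. -/
def epsPreOpen {n : ℕ} (U : Opens (M.X n)) : Opens (M.X (n + 1)) :=
  preOpen M (deltaEps n 0) U

lemma epsPre_mono {n : ℕ} {U V : Opens (M.X n)} (h : U ≤ V) :
    epsPreOpen (M := M) U ≤ epsPreOpen V :=
  fun _ hz => h hz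

lemma mem_epsPre_of {k n : ℕ} (f : DeltaHom k n) {U : Opens (M.X n)} {V : Opens (M.X k)}
    (h : ∀ x ∈ U, M.map f x ∈ V) {x : M.X (n + 1)} (hx : x ∈ epsPreOpen U) :
    M.map (primeHom f) x ∈ epsPreOpen V := by
  show M.map (deltaEps k 0) (M.map (primeHom f) x) ∈ V
  rw [M.map_comp (deltaEps k 0) (primeHom f) x, ← primeHom_eps f,
    ← M.map_comp f (deltaEps n 0) x]
  exact h _ hx

/-- The sections of `I(𝒜)^n` over `U`: arbitrary (not necessarily continuous) functions
`φ` on `ε̃₀⁻¹(U) ⊆ M_{n+1}` with `φ(x)` in the stalk `𝒜^{n+1}_x`. -/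
abbrev IAsec (𝒜 : SimpAbPresheaf M) (n : ℕ) (U : Opens (M.X n)) : Type u :=
  ∀ x : (epsPreOpen U : Set (M.X (n + 1))), Stalk (𝒜.Sh (n + 1)) x.1

/-- The presheaf `I(𝒜)^n` on `M.X n`. -/
noncomputable def IApresheaf (𝒜 : SimpAbPresheaf M) (n : ℕ) : AbPresheaf (M.X n) where
  sec := IAsec 𝒜 n
  grp := fun _ => inferInstance
  res {U V} h :=
    { toFun := fun φ x => φ ⟨x.1, epsPre_mono h x.2⟩
      map_zero' := rfl
      map_add' := fun _ _ => rfl }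
  res_rfl _ := rfl
  res_res _ _ _ := rfl

/-- The simplicial sheaf `I(𝒜)^•` (Section 6 of the paper). -/
noncomputable def IAfun (𝒜 : SimpAbPresheaf M) : SimpAbPresheaf M where
  Sh := IApresheaf 𝒜
  cmap {k n} f {U V} h :=
    { toFun := fun φ x =>
        stalkMap 𝒜 (primeHom f) x.1
          (φ ⟨M.map (primeHom f) x.1, mem_epsPre_of f h x.2⟩)
      map_zero' := by
        funext x
        show stalkMap 𝒜 (primeHom f) x.1 0 = 0
        exact map_zero _
      map_add' := fun φ ψ => by
        funext x
        show stalkMap 𝒜 (primeHom f) x.1 (_ + _) = _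
        rw [map_add]
        rfl }
  cmap_res {k n} f U U' V V' hU hV h h' sv := by
    funext x
    rfl
  cmap_id {n} {U V} h sv := by
    funext x
    change IAsec 𝒜 n V at sv
    show stalkMap 𝒜 (primeHom OrderHom.id) x.1 _ = _
    have ep : M.map (primeHom (OrderHom.id : DeltaHom n n)) x.1
        = M.map OrderHom.id x.1 := by
      rw [primeHom_id]
    rw [stalkMap_congr_hom 𝒜 (primeHom_id n) x.1 ep, stalkCast_eval, stalkMap_id,
      stalkCast_eval]
    rfl
  cmap_comp {l k n} g f {U V W} hf hg sw := by
    funext x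
    change IAsec 𝒜 l W at sw
    show stalkMap 𝒜 (primeHom f) x.1
        (stalkMap 𝒜 (primeHom g) (M.map (primeHom f) x.1)
          (sw ⟨M.map (primeHom g) (M.map (primeHom f) x.1), _⟩)) = _
    have e : (primeHom f).comp (primeHom g) = primeHom (f.comp g) :=
      (primeHom_comp g f).symm
    have ep : M.map ((primeHom f).comp (primeHom g)) x.1
        = M.map (primeHom (f.comp g)) x.1 := by rw [e]
    rw [stalkMap_comp 𝒜 (primeHom g) (primeHom f) x.1, stalkCast_eval,
      stalkMap_congr_hom 𝒜 e x.1 ep, stalkCast_eval]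
    rfl

end GroupoidCohomology

namespace GroupoidCohomology

open TopologicalSpace

variable {M : SimplicialSpace.{u}}

/-! ### Auxiliary material for the contracting homotopy -/

/-- A choice of covering index through each point. -/
noncomputable def Cover.pick (𝒰 : Cover M) (k : ℕ) (z : M.X k) : 𝒰.idx k :=
  (𝒰.covers k z).choose

lemma Cover.pick_mem (𝒰 : Cover M) (k : ℕ) (z : M.X k) :
    z ∈ 𝒰.U k (𝒰.pick k z) := (𝒰.covers k z).choose_spec

@[simp] lemma deltaEps_val (n : ℕ) (i : Fin (n + 2)) (j : Fin (n + 1)) :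
    ((deltaEps n i j : Fin (n + 2)) : ℕ)
      = if (j : ℕ) < (i : ℕ) then (j : ℕ) else (j : ℕ) + 1 := by
  show ((i.succAbove j : Fin (n + 2)) : ℕ) = _
  rcases lt_or_ge (j : ℕ) (i : ℕ) with h | h
  · rw [Fin.succAbove_of_castSucc_lt _ _ (by simpa [Fin.lt_def] using h)]
    simp [h]
  · rw [Fin.succAbove_of_le_castSucc _ _ (by simpa [Fin.le_def] using h)]
    simp [Nat.not_lt.mpr h]

/-- The degeneracy `η₀ : [n+1] → [n]`. -/
def eta0 (n : ℕ) : DeltaHom (n + 1) n where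
  toFun j := ⟨(j : ℕ) - 1, by have := j.isLt; omega⟩
  monotone' a b hab := by
    have h : (a : ℕ) ≤ (b : ℕ) := hab
    simp only [Fin.mk_le_mk]
    omega

@[simp] lemma eta0_val (n : ℕ) (j : Fin (n + 2)) :
    ((eta0 n j : Fin (n + 1)) : ℕ) = (j : ℕ) - 1 := rfl

lemma eta0_comp_eps0 (n : ℕ) :
    (eta0 (n + 1)).comp (deltaEps (n + 1) 0) = OrderHom.id := by
  apply OrderHom.ext; funext j; apply Fin.ext
  simp only [OrderHom.comp_coe, Function.comp_apply, OrderHom.id_coe, id_eq,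
    eta0_val, deltaEps_val, Fin.val_zero]
  split_ifs <;> simp_all <;> omega

lemma eta0_comp_eps1 (n : ℕ) :
    (eta0 (n + 1)).comp (deltaEps (n + 1) 1) = OrderHom.id := by
  apply OrderHom.ext; funext j; apply Fin.ext
  have h1 : ((1 : Fin (n + 3)) : ℕ) = 1 := rfl
  simp only [OrderHom.comp_coe, Function.comp_apply, OrderHom.id_coe, id_eq,
    eta0_val, deltaEps_val, h1]
  split_ifs <;> simp_all <;> omega

lemma eta0_comp_eps_succ_succ (n : ℕ) (k : Fin (n + 2)) :
    (eta0 (n + 2)).comp (deltaEps (n + 2) (Fin.succ (Fin.succ k)))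
      = (deltaEps (n + 1) (Fin.succ k)).comp (eta0 (n + 1)) := by
  apply OrderHom.ext; funext j; apply Fin.ext
  simp only [OrderHom.comp_coe, Function.comp_apply, eta0_val, deltaEps_val, Fin.val_succ]
  by_cases h : (j : ℕ) < k + 1 + 1 <;> by_cases h' : (j : ℕ) - 1 < k + 1 <;>
    simp only [h, h', ↓reduceIte] <;> omega

lemma eps0_comp_eps (n : ℕ) (k : Fin (n + 2)) :
    (deltaEps (n + 1) 0).comp (deltaEps n k)
      = (deltaEps (n + 1) (Fin.succ k)).comp (deltaEps n 0) := by
  apply OrderHom.ext; funext j; apply Fin.ext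
  simp only [OrderHom.comp_coe, Function.comp_apply, deltaEps_val, Fin.val_succ, Fin.val_zero]
  split_ifs <;> simp_all <;> omega

lemma primeHom_eps_succ (n : ℕ) (i : Fin (n + 2)) :
    primeHom (deltaEps n i) = deltaEps (n + 1) (Fin.succ i) := by
  apply OrderHom.ext; funext j
  induction j using Fin.cases with
  | zero =>
      show (0 : Fin (n + 3)) = (Fin.succ i).succAbove 0
      rw [Fin.succAbove_ne_zero_zero (Fin.succ_ne_zero i)]
  | succ t =>
      show ((deltaEps n i) t).succ = (Fin.succ i).succAbove t.succ
      rw [Fin.succ_succAbove_succ]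
      rfl

/-- Lowering a strict map `[r] → [n+1]` avoiding `0` through `ε₀`. -/
lemma deltaEps_zero_apply (n : ℕ) (j : Fin (n + 1)) : deltaEps n 0 j = j.succ :=
  Fin.zero_succAbove j

lemma lowerHom_ne_zero {r n : ℕ} (f : StrictHom r (n + 1)) (h : f.1 0 ≠ 0)
    (i : Fin (r + 1)) : f.1 i ≠ 0 := fun h0 =>
  h (Fin.le_zero_iff.mp (h0 ▸ f.1.monotone (Fin.zero_le i)))

def lowerHom {r n : ℕ} (f : StrictHom r (n + 1)) (h : f.1 0 ≠ 0) : StrictHom r n :=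
  ⟨⟨fun i => (f.1 i).pred (lowerHom_ne_zero f h i),
    fun a b hab => by
      show (f.1 a).pred (lowerHom_ne_zero f h a) ≤ (f.1 b).pred (lowerHom_ne_zero f h b)
      rw [Fin.pred_le_pred_iff]
      exact f.1.monotone hab⟩,
   fun a b hab => by
      show (f.1 a).pred (lowerHom_ne_zero f h a) < (f.1 b).pred (lowerHom_ne_zero f h b)
      rw [Fin.pred_lt_pred_iff]
      exact f.2 hab⟩

lemma eps0_comp_lowerHom {r n : ℕ} (f : StrictHom r (n + 1)) (h : f.1 0 ≠ 0) :
    (deltaEps n 0).comp (lowerHom f h).1 = f.1 := by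
  apply OrderHom.ext; funext i
  show (0 : Fin (n + 2)).succAbove ((lowerHom f h).1 i) = f.1 i
  rw [Fin.zero_succAbove]
  show ((f.1 i).pred (lowerHom_ne_zero f h i)).succ = f.1 i
  exact Fin.succ_pred _ _

lemma lowerHom_eq {r n : ℕ} (f : StrictHom r (n + 1)) (h : f.1 0 ≠ 0) (g : DeltaHom r n)
    (hg : (deltaEps n 0).comp g = f.1) : (lowerHom f h).1 = g := by
  apply OrderHom.ext; funext i
  have h1 : ((deltaEps n 0).comp (lowerHom f h).1) i = ((deltaEps n 0).comp g) i := by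
    rw [eps0_comp_lowerHom f h, hg]
  have h2 : ((lowerHom f h).1 i).succ = (g i).succ := by
    have e1 : ((deltaEps n 0).comp (lowerHom f h).1) i = ((lowerHom f h).1 i).succ :=
      deltaEps_zero_apply n ((lowerHom f h).1 i)
    have e2 : ((deltaEps n 0).comp g) i = (g i).succ := deltaEps_zero_apply n (g i)
    rw [← e1, ← e2]; exact h1
  exact Fin.succ_injective _ h2

/-- Extension of an index `λ ∈ Λ_n` to `Λ_{n+1}`, adapted to a point `x ∈ M_{n+1}`. -/
noncomputable def extLam (𝒰 : Cover M) {n : ℕ} (l : 𝒰.Lambda n) (x : M.X (n + 1)) :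
    𝒰.Lambda (n + 1) :=
  fun r f => if h : f.1 0 = 0 then 𝒰.pick r (M.map f.1 x) else l r (lowerHom f h)

lemma extLam_mem (𝒰 : Cover M) {n : ℕ} (l : 𝒰.Lambda n) (x : M.X (n + 1))
    (hx : M.map (deltaEps n 0) x ∈ 𝒰.lambdaOpen l) :
    x ∈ 𝒰.lambdaOpen (extLam 𝒰 l x) := by
  intro r f
  simp only [extLam]
  split_ifs with h
  · exact 𝒰.pick_mem r _
  · have : M.map f.1 x = M.map (lowerHom f h).1 (M.map (deltaEps n 0) x) := by
      rw [M.map_comp, eps0_comp_lowerHom]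
    rw [this]
    exact hx r (lowerHom f h)

lemma extLam_epsPull_zero (𝒰 : Cover M) {n : ℕ} (l : 𝒰.Lambda n) (x : M.X (n + 1)) :
    𝒰.epsPull 0 (extLam 𝒰 l x) = l := by
  funext r f
  simp only [Cover.epsPull, extLam]
  have h' : ¬ ((deltaEps n 0).comp f.1) 0 = 0 := by
    show ¬ (0 : Fin (n + 2)).succAbove (f.1 0) = 0
    rw [Fin.zero_succAbove]
    exact Fin.succ_ne_zero _
  rw [dif_neg h']
  exact congrArg (l r) (Subtype.ext (lowerHom_eq _ h' f.1 rfl))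

lemma extLam_epsPull_succ (𝒰 : Cover M) {n : ℕ} (l : 𝒰.Lambda (n + 1)) (x : M.X (n + 2))
    (k : Fin (n + 2)) :
    𝒰.epsPull (Fin.succ k) (extLam 𝒰 l x)
      = extLam 𝒰 (𝒰.epsPull k l) (M.map (primeHom (deltaEps n k)) x) := by
  funext r f
  simp only [Cover.epsPull, extLam]
  by_cases h : f.1 0 = 0
  · have h' : ((deltaEps (n + 1) (Fin.succ k)).comp f.1) 0 = 0 := by
      show (Fin.succ k).succAbove (f.1 0) = 0
      rw [h]
      exact Fin.succAbove_ne_zero_zero (Fin.succ_ne_zero k)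
    rw [dif_pos h', dif_pos h, M.map_comp f.1 (primeHom (deltaEps n k)) x,
      primeHom_eps_succ]
  · have h' : ¬ ((deltaEps (n + 1) (Fin.succ k)).comp f.1) 0 = 0 := by
      intro h0
      apply h
      have h2 : (Fin.succ k).succAbove (0 : Fin (n + 2)) = 0 :=
        Fin.succAbove_ne_zero_zero (Fin.succ_ne_zero k)
      have h0' : (Fin.succ k).succAbove (f.1 0) = (Fin.succ k).succAbove 0 := by
        rw [h2]; exact h0
      exact (Fin.succAboveOrderEmb (Fin.succ k)).injective h0'
    rw [dif_neg h', dif_neg h]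
    refine congrArg (l r) (Subtype.ext ?_)
    refine lowerHom_eq _ h' ((deltaEps n k).comp (lowerHom f h).1) ?_
    calc (deltaEps (n + 1) 0).comp ((deltaEps n k).comp (lowerHom f h).1)
        = ((deltaEps (n + 1) 0).comp (deltaEps n k)).comp (lowerHom f h).1 := rfl
      _ = ((deltaEps (n + 1) (Fin.succ k)).comp (deltaEps n 0)).comp (lowerHom f h).1 := by
          rw [eps0_comp_eps]
      _ = (deltaEps (n + 1) (Fin.succ k)).comp ((deltaEps n 0).comp (lowerHom f h).1) := rfl
      _ = (deltaEps (n + 1) (Fin.succ k)).comp f.1 := by rw [eps0_comp_lowerHom]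

lemma map_eps0_eta0 {n : ℕ} (x : M.X (n + 1)) :
    M.map (deltaEps (n + 1) 0) (M.map (eta0 (n + 1)) x) = x := by
  rw [M.map_comp, eta0_comp_eps0, M.map_id]

lemma mem_epsPre_eta0 (𝒰 : Cover M) {n : ℕ} (l : 𝒰.Lambda n) (x : M.X (n + 1))
    (hx : x ∈ epsPreOpen (𝒰.lambdaOpen l)) :
    M.map (eta0 (n + 1)) x ∈ epsPreOpen (𝒰.lambdaOpen (extLam 𝒰 l x)) := by
  show M.map (deltaEps (n + 1) 0) (M.map (eta0 (n + 1)) x) ∈ 𝒰.lambdaOpen (extLam 𝒰 l x)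
  rw [map_eps0_eta0]
  exact extLam_mem 𝒰 l x hx

lemma IA_index_congr (𝒜 : SimpAbPresheaf M) (𝒰 : Cover M) {n : ℕ}
    (c : Cochain (IAfun 𝒜) 𝒰 n) {μ ν : 𝒰.Lambda n} (e : μ = ν) (w : M.X (n + 1))
    (hμ : w ∈ epsPreOpen (𝒰.lambdaOpen μ)) (hν : w ∈ epsPreOpen (𝒰.lambdaOpen ν)) :
    c μ ⟨w, hμ⟩ = c ν ⟨w, hν⟩ := by subst e; rfl

/-- Evaluation of a section of `I(𝒜)^n` at a point, as a group homomorphism. -/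
def evalIA (𝒜 : SimpAbPresheaf M) (n : ℕ) (U : Opens (M.X n))
    (z : (epsPreOpen U : Set (M.X (n + 1)))) :
    IAsec 𝒜 n U →+ Stalk (𝒜.Sh (n + 1)) z.1 where
  toFun φ := φ z
  map_zero' := rfl
  map_add' _ _ := rfl

lemma coboundary_IA_apply (𝒜 : SimpAbPresheaf M) (𝒰 : Cover M) (n : ℕ)
    (c : Cochain (IAfun 𝒜) 𝒰 n) (l : 𝒰.Lambda (n + 1)) (z : M.X (n + 2))
    (hz : z ∈ epsPreOpen (𝒰.lambdaOpen l)) :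
    coboundary (IAfun 𝒜) 𝒰 n c l ⟨z, hz⟩
      = ∑ k : Fin (n + 2), ((-1 : ℤ) ^ (k : ℕ)) •
          stalkMap 𝒜 (primeHom (deltaEps n k)) z
            (c (𝒰.epsPull k l)
              ⟨M.map (primeHom (deltaEps n k)) z,
                mem_epsPre_of (deltaEps n k)
                  (fun w hw => 𝒰.mem_epsPull k l hw) hz⟩) := by
  show evalIA 𝒜 (n + 1) (𝒰.lambdaOpen l) ⟨z, hz⟩
      (∑ k : Fin (n + 2), ((-1 : ℤ) ^ (k : ℕ)) •
        ((IAfun 𝒜).cmap (deltaEps n k) (fun w hw => 𝒰.mem_epsPull k l hw)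
          (c (𝒰.epsPull k l)))) = _
  erw [map_sum]
  exact Finset.sum_congr rfl fun k _ => by erw [map_zsmul]; rfl

/-- The contracting homotopy `H : C^{n+1}(𝒰;I(𝒜)) → C^n(𝒰;I(𝒜))`. -/
noncomputable def hmtp (𝒜 : SimpAbPresheaf M) (𝒰 : Cover M) (n : ℕ) :
    Cochain (IAfun 𝒜) 𝒰 (n + 1) →+ Cochain (IAfun 𝒜) 𝒰 n where
  toFun c l x :=
    stalkMap 𝒜 (eta0 (n + 1)) x.1
      (c (extLam 𝒰 l x.1) ⟨M.map (eta0 (n + 1)) x.1, mem_epsPre_eta0 𝒰 l x.1 x.2⟩)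
  map_zero' := by
    funext l x
    show stalkMap 𝒜 (eta0 (n + 1)) x.1 0 = 0
    exact map_zero _
  map_add' c₁ c₂ := by
    funext l x
    exact map_add (stalkMap 𝒜 (eta0 (n + 1)) x.1) _ _

lemma key_zero (𝒜 : SimpAbPresheaf M) (𝒰 : Cover M) (m : ℕ)
    (c : Cochain (IAfun 𝒜) 𝒰 (m + 1)) (l : 𝒰.Lambda (m + 1)) (z : M.X (m + 2))
    (hz : z ∈ epsPreOpen (𝒰.lambdaOpen l)) :
    stalkMap 𝒜 (eta0 (m + 2)) z
      (stalkMap 𝒜 (primeHom (deltaEps (m + 1) (0 : Fin (m + 3)))) (M.map (eta0 (m + 2)) z)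
        (c (𝒰.epsPull 0 (extLam 𝒰 l z))
          ⟨M.map (primeHom (deltaEps (m + 1) (0 : Fin (m + 3)))) (M.map (eta0 (m + 2)) z),
            mem_epsPre_of (deltaEps (m + 1) (0 : Fin (m + 3)))
              (fun w hw => 𝒰.mem_epsPull 0 (extLam 𝒰 l z) hw)
              (mem_epsPre_eta0 𝒰 l z hz)⟩))
    = c l ⟨z, hz⟩ := by
  rw [stalkMap_comp 𝒜 (primeHom (deltaEps (m + 1) (0 : Fin (m + 3)))) (eta0 (m + 2)) z,
    stalkCast_eval (φ := c (𝒰.epsPull 0 (extLam 𝒰 l z)))]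
  have e : (eta0 (m + 2)).comp (primeHom (deltaEps (m + 1) (0 : Fin (m + 3))))
      = (OrderHom.id : DeltaHom (m + 2) (m + 2)) := by
    rw [primeHom_eps_succ, Fin.succ_zero_eq_one]
    exact eta0_comp_eps1 (m + 1)
  have ep : M.map ((eta0 (m + 2)).comp (primeHom (deltaEps (m + 1) (0 : Fin (m + 3))))) z
      = M.map OrderHom.id z := by rw [e]
  rw [stalkMap_congr_hom 𝒜 e z ep, stalkCast_eval (φ := c (𝒰.epsPull 0 (extLam 𝒰 l z))),
    stalkMap_id, stalkCast_eval (φ := c (𝒰.epsPull 0 (extLam 𝒰 l z)))]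
  exact IA_index_congr 𝒜 𝒰 c (extLam_epsPull_zero 𝒰 l z) z _ hz

lemma key_succ (𝒜 : SimpAbPresheaf M) (𝒰 : Cover M) (m : ℕ)
    (c : Cochain (IAfun 𝒜) 𝒰 (m + 1)) (l : 𝒰.Lambda (m + 1)) (z : M.X (m + 2))
    (hz : z ∈ epsPreOpen (𝒰.lambdaOpen l)) (k : Fin (m + 2)) :
    stalkMap 𝒜 (eta0 (m + 2)) z
      (stalkMap 𝒜 (primeHom (deltaEps (m + 1) (Fin.succ k))) (M.map (eta0 (m + 2)) z)
        (c (𝒰.epsPull (Fin.succ k) (extLam 𝒰 l z))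
          ⟨M.map (primeHom (deltaEps (m + 1) (Fin.succ k))) (M.map (eta0 (m + 2)) z),
            mem_epsPre_of (deltaEps (m + 1) (Fin.succ k))
              (fun w hw => 𝒰.mem_epsPull (Fin.succ k) (extLam 𝒰 l z) hw)
              (mem_epsPre_eta0 𝒰 l z hz)⟩))
    = stalkMap 𝒜 (primeHom (deltaEps m k)) z
        (stalkMap 𝒜 (eta0 (m + 1)) (M.map (primeHom (deltaEps m k)) z)
          (c (extLam 𝒰 (𝒰.epsPull k l) (M.map (primeHom (deltaEps m k)) z))
            ⟨M.map (eta0 (m + 1)) (M.map (primeHom (deltaEps m k)) z),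
              mem_epsPre_eta0 𝒰 (𝒰.epsPull k l) (M.map (primeHom (deltaEps m k)) z)
                (mem_epsPre_of (deltaEps m k)
                  (fun w hw => 𝒰.mem_epsPull k l hw) hz)⟩)) := by
  rw [stalkMap_comp 𝒜 (primeHom (deltaEps (m + 1) (Fin.succ k))) (eta0 (m + 2)) z,
    stalkCast_eval (φ := c (𝒰.epsPull (Fin.succ k) (extLam 𝒰 l z)))]
  rw [stalkMap_comp 𝒜 (eta0 (m + 1)) (primeHom (deltaEps m k)) z,
    stalkCast_eval (φ := c (extLam 𝒰 (𝒰.epsPull k l) (M.map (primeHom (deltaEps m k)) z)))]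
  have e : (eta0 (m + 2)).comp (primeHom (deltaEps (m + 1) (Fin.succ k)))
      = (primeHom (deltaEps m k)).comp (eta0 (m + 1)) := by
    rw [primeHom_eps_succ, primeHom_eps_succ]
    exact eta0_comp_eps_succ_succ m k
  have ep : M.map ((eta0 (m + 2)).comp (primeHom (deltaEps (m + 1) (Fin.succ k)))) z
      = M.map ((primeHom (deltaEps m k)).comp (eta0 (m + 1))) z := by rw [e]
  rw [stalkMap_congr_hom 𝒜 e z ep, stalkCast_eval (φ := c (𝒰.epsPull (Fin.succ k) (extLam 𝒰 l z)))]
  exact congrArg (stalkMap 𝒜 ((primeHom (deltaEps m k)).comp (eta0 (m + 1))) z)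
    (IA_index_congr 𝒜 𝒰 c (extLam_epsPull_succ 𝒰 l z k) _ _ _)

lemma sum_cancel {A : Type*} [AddCommGroup A] {n : ℕ} (T : Fin n → A)
    (S : Fin (n + 1) → A) (a : A) (h0 : S 0 = a) (hs : ∀ k : Fin n, S (Fin.succ k) = T k) :
    (∑ k : Fin n, ((-1 : ℤ) ^ (k : ℕ)) • T k)
      + (∑ j : Fin (n + 1), ((-1 : ℤ) ^ (j : ℕ)) • S j) = a := by
  rw [Fin.sum_univ_succ]
  simp only [hs, h0, Fin.val_zero, pow_zero, one_smul, Fin.val_succ, pow_succ,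
    mul_neg_one, neg_smul]
  rw [Finset.sum_neg_distrib]
  abel

lemma hmtp_identity (𝒜 : SimpAbPresheaf M) (𝒰 : Cover M) (m : ℕ)
    (c : Cochain (IAfun 𝒜) 𝒰 (m + 1)) :
    c = coboundary (IAfun 𝒜) 𝒰 m (hmtp 𝒜 𝒰 m c)
        + hmtp 𝒜 𝒰 (m + 1) (coboundary (IAfun 𝒜) 𝒰 (m + 1) c) := by
  funext l x
  obtain ⟨z, hz⟩ := x
  show c l ⟨z, hz⟩
      = coboundary (IAfun 𝒜) 𝒰 m (hmtp 𝒜 𝒰 m c) l ⟨z, hz⟩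
        + stalkMap 𝒜 (eta0 (m + 2)) z
            (coboundary (IAfun 𝒜) 𝒰 (m + 1) c (extLam 𝒰 l z)
              ⟨M.map (eta0 (m + 2)) z, mem_epsPre_eta0 𝒰 l z hz⟩)
  rw [coboundary_IA_apply 𝒜 𝒰 (m + 1) c (extLam 𝒰 l z) (M.map (eta0 (m + 2)) z)
      (mem_epsPre_eta0 𝒰 l z hz), map_sum]
  simp only [map_zsmul]
  rw [coboundary_IA_apply 𝒜 𝒰 m (hmtp 𝒜 𝒰 m c) l z hz]
  exact (sum_cancel _ _ _ (key_zero 𝒜 𝒰 m c l z hz) (key_succ 𝒜 𝒰 m c l z hz)).symm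

/-- **Statement 12** (Lemma 6.2 of the paper). Let `𝒜^•` be an abelian sheaf on a
simplicial space `M_•` and `𝒰_•` any open cover. Then the complex `C^*(𝒰_•;I(𝒜)^•)`
is homotopically trivial; in particular `H^n(𝒰_•;I(𝒜)^•) = 0` for all `n ≥ 1`. -/
theorem statement_12 (M : SimplicialSpace.{u}) (𝒜 : SimpAbPresheaf M) (h𝒜 : 𝒜.IsSheaf)
    (𝒰 : Cover M) :
    (∃ H : ∀ m : ℕ, Cochain (IAfun 𝒜) 𝒰 (m + 1) →+ Cochain (IAfun 𝒜) 𝒰 m,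
      ∀ (m : ℕ) (c : Cochain (IAfun 𝒜) 𝒰 (m + 1)),
        c = coboundary (IAfun 𝒜) 𝒰 m (H m c) + H (m + 1) (coboundary (IAfun 𝒜) 𝒰 (m + 1) c)) ∧
    (∀ n : ℕ, 1 ≤ n → ∀ ξ : coverH (IAfun 𝒜) 𝒰 n, ξ = 0) := by
  refine ⟨⟨fun m => hmtp 𝒜 𝒰 m, fun m c => hmtp_identity 𝒜 𝒰 m c⟩, ?_⟩
  intro n hn ξ
  obtain ⟨m, rfl⟩ : ∃ m, n = m + 1 := ⟨n - 1, by omega⟩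
  obtain ⟨z, rfl⟩ := QuotientAddGroup.mk'_surjective
    ((boundaries (IAfun 𝒜) 𝒰 (m + 1)).addSubgroupOf (cocycles (IAfun 𝒜) 𝒰 (m + 1))) ξ
  have hz1 : coboundary (IAfun 𝒜) 𝒰 (m + 1) z.1 = 0 := z.2
  have hid := hmtp_identity 𝒜 𝒰 m z.1
  rw [hz1, map_zero, add_zero] at hid
  refine (QuotientAddGroup.eq_zero_iff z).mpr ?_
  rw [AddSubgroup.mem_addSubgroupOf]
  show z.1 ∈ boundaries (IAfun 𝒜) 𝒰 (m + 1)
  exact ⟨hmtp 𝒜 𝒰 m z.1, hid.symm⟩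

end GroupoidCohomology
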